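/- Let ρ ≥ 2 + √6, let T ≥ 2 and n ≥ 1 be integers, and let K ⊆ {0,…,T−1} be a set with T−1 ∈ K and t₁ := min K < T−1. For each k ∈ K let d_k ∈ ℝⁿ be a unit vector, and define x_t := Σ_{k∈K, k<t} ρ^{t−k−1} d_k for t = 0,…,T−1. Then ‖x_{T−1}‖₂ > Σ_{t=0}^{T−2} ‖x_t‖₂. -/

import Mathlib

open scoped BigOperators

/-- Euclidean norm of a vector in `ℝ^k`. -/
noncomputable def e2norm {k : ℕ} (v : Fin k → ℝ) : ℝ := Real.sqrt (∑ i, (v i) ^ 2)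

lemma e2norm_eq_norm {k : ℕ} (v : Fin k → ℝ) :
    e2norm v = ‖(WithLp.equiv 2 (Fin k → ℝ)).symm v‖ := by
  rw [EuclideanSpace.norm_eq]
  simp [e2norm, Real.norm_eq_abs, sq_abs]

lemma e2norm_sum_le {k : ℕ} {ι : Type*} (s : Finset ι) (f : ι → Fin k → ℝ) :
    e2norm (∑ i ∈ s, f i) ≤ ∑ i ∈ s, e2norm (f i) := by
  simp only [e2norm_eq_norm]
  have : (WithLp.equiv 2 (Fin k → ℝ)).symm (∑ i ∈ s, f i)
      = ∑ i ∈ s, (WithLp.equiv 2 (Fin k → ℝ)).symm (f i) := WithLp.toLp_sum (p := 2) (s := s) (f := f)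
  rw [this]
  exact norm_sum_le _ _

lemma e2norm_smul {k : ℕ} (c : ℝ) (a : Fin k → ℝ) :
    e2norm (c • a) = |c| * e2norm a := by
  simp only [e2norm_eq_norm]
  have : (WithLp.equiv 2 (Fin k → ℝ)).symm (c • a)
      = c • (WithLp.equiv 2 (Fin k → ℝ)).symm a := rfl
  rw [this, norm_smul, Real.norm_eq_abs]

lemma sub_e2norm_le {k : ℕ} (a b : Fin k → ℝ) :
    e2norm a - e2norm b ≤ e2norm (a + b) := by
  simp only [e2norm_eq_norm]
  have : (WithLp.equiv 2 (Fin k → ℝ)).symm (a + b)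
      = (WithLp.equiv 2 (Fin k → ℝ)).symm a + (WithLp.equiv 2 (Fin k → ℝ)).symm b := rfl
  rw [this]
  have h := norm_sub_norm_le ((WithLp.equiv 2 (Fin k → ℝ)).symm a)
    (-(WithLp.equiv 2 (Fin k → ℝ)).symm b)
  simpa [sub_neg_eq_add] using h

lemma geom_le_pow (ρ : ℝ) (hρ : 4 ≤ ρ) (m : ℕ) :
    ∑ j ∈ Finset.range m, ρ ^ j ≤ ρ ^ m := by
  induction m with
  | zero => simp
  | succ m ih =>
    rw [Finset.sum_range_succ, pow_succ]
    have hpm : (0:ℝ) < ρ ^ m := pow_pos (by linarith) m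
    nlinarith

lemma key_ineq (ρ : ℝ) (hρ : 4 ≤ ρ) (m : ℕ) :
    ∑ s ∈ Finset.range m, (∑ j ∈ Finset.range (s + 1), ρ ^ j)
      < ρ ^ m - ∑ j ∈ Finset.range m, ρ ^ j := by
  induction m with
  | zero => simp
  | succ m ih =>
    have hg := geom_le_pow ρ hρ m
    have hpm : (0:ℝ) < ρ ^ m := pow_pos (by linarith) m
    rw [Finset.sum_range_succ, Finset.sum_range_succ (f := fun j => ρ ^ j), pow_succ]
    have h4 : 4 * ρ ^ m ≤ ρ ^ m * ρ := by nlinarith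
    linarith

lemma sum_exp_le (ρ : ℝ) (hρ : 4 ≤ ρ) (S : Finset ℕ) (t u : ℕ)
    (hlt : ∀ k ∈ S, k < t) (hu : ∀ k ∈ S, t - k - 1 < u) :
    ∑ k ∈ S, ρ ^ (t - k - 1) ≤ ∑ j ∈ Finset.range u, ρ ^ j := by
  have hinj : ∀ x ∈ S, ∀ y ∈ S, t - x - 1 = t - y - 1 → x = y := by
    intro a ha b hb hab
    have := hlt a ha; have := hlt b hb; omega
  have himg : ∑ j ∈ S.image (fun k => t - k - 1), ρ ^ j = ∑ k ∈ S, ρ ^ (t - k - 1) :=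
    Finset.sum_image hinj
  rw [← himg]
  apply Finset.sum_le_sum_of_subset_of_nonneg
  · intro j hj
    rw [Finset.mem_image] at hj
    obtain ⟨a, ha, rfl⟩ := hj
    exact Finset.mem_range.mpr (hu a ha)
  · intro j _ _
    positivity

/-- key deterministic inequality for the unstable counterexample.
Let `ρ ≥ 2 + √6`, `T ≥ 2`, `n ≥ 1`, `K ⊆ {0,…,T−1}` with `T−1 ∈ K` and `min K < T−1`.
For unit vectors `d_k` (`k ∈ K`) and `x_t := Σ_{k∈K, k<t} ρ^{t−k−1} d_k`, we have
`‖x_{T−1}‖₂ > Σ_{t=0}^{T−2} ‖x_t‖₂`. -/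
theorem unstable_trajectory_inequality
    (ρ : ℝ) (hρ : 2 + Real.sqrt 6 ≤ ρ)
    (T n : ℕ) (hT : 2 ≤ T) (hn : 1 ≤ n)
    (K : Finset ℕ) (hKsub : K ⊆ Finset.range T)
    (hlast : T - 1 ∈ K)
    (hmin : K.min' ⟨T - 1, hlast⟩ < T - 1)
    (d : ℕ → (Fin n → ℝ)) (hd : ∀ k ∈ K, e2norm (d k) = 1)
    (x : ℕ → (Fin n → ℝ))
    (hx : ∀ t < T, x t = ∑ k ∈ K.filter (fun k => k < t), ρ ^ (t - k - 1) • d k) :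
    ∑ t ∈ Finset.range (T - 1), e2norm (x t) < e2norm (x (T - 1)) := by
  have hρ4 : (4:ℝ) ≤ ρ := by
    have h6 : Real.sqrt 6 ^ 2 = 6 := Real.sq_sqrt (by norm_num)
    have h0 : 0 ≤ Real.sqrt 6 := Real.sqrt_nonneg 6
    nlinarith
  have hρ0 : (0:ℝ) < ρ := by linarith
  set t₁ := K.min' ⟨T - 1, hlast⟩ with ht₁def
  have ht₁K : t₁ ∈ K := K.min'_mem _
  have ht₁le : ∀ k ∈ K, t₁ ≤ k := fun k hk => K.min'_le k hk
  set m := T - 2 - t₁ with hmdef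
  have hTm : T - 1 = t₁ + 1 + m := by omega
  -- upper bound for each t < T
  have hub : ∀ t < T, e2norm (x t) ≤ ∑ j ∈ Finset.range (t - t₁), ρ ^ j := by
    intro t ht
    rw [hx t ht]
    calc e2norm (∑ k ∈ K.filter (fun k => k < t), ρ ^ (t - k - 1) • d k)
        ≤ ∑ k ∈ K.filter (fun k => k < t), e2norm (ρ ^ (t - k - 1) • d k) :=
          e2norm_sum_le _ _
      _ = ∑ k ∈ K.filter (fun k => k < t), ρ ^ (t - k - 1) := by
          apply Finset.sum_congr rfl
          intro k hk
          rw [Finset.mem_filter] at hk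
          rw [e2norm_smul, hd k hk.1, mul_one, abs_of_pos (pow_pos hρ0 _)]
      _ ≤ ∑ j ∈ Finset.range (t - t₁), ρ ^ j := by
          apply sum_exp_le ρ hρ4
          · intro k hk; rw [Finset.mem_filter] at hk; exact hk.2
          · intro k hk; rw [Finset.mem_filter] at hk
            have := ht₁le k hk.1; have := hk.2; omega
  -- lower bound for x (T-1)
  have hlb : ρ ^ m - ∑ j ∈ Finset.range m, ρ ^ j ≤ e2norm (x (T - 1)) := by
    set S := K.filter (fun k => k < T - 1) with hSdef
    have ht₁S : t₁ ∈ S := Finset.mem_filter.mpr ⟨ht₁K, hmin⟩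
    have hxT : x (T - 1) = ρ ^ m • d t₁ + ∑ k ∈ S.erase t₁, ρ ^ (T - 1 - k - 1) • d k := by
      rw [hx (T - 1) (by omega), ← Finset.add_sum_erase _ _ ht₁S,
        show T - 1 - t₁ - 1 = m by omega]
    rw [hxT]
    have h1 : e2norm (ρ ^ m • d t₁) = ρ ^ m := by
      rw [e2norm_smul, hd t₁ ht₁K, mul_one, abs_of_pos (pow_pos hρ0 _)]
    have h2 : e2norm (∑ k ∈ S.erase t₁, ρ ^ (T - 1 - k - 1) • d k)
        ≤ ∑ j ∈ Finset.range m, ρ ^ j := by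
      calc e2norm (∑ k ∈ S.erase t₁, ρ ^ (T - 1 - k - 1) • d k)
          ≤ ∑ k ∈ S.erase t₁, e2norm (ρ ^ (T - 1 - k - 1) • d k) := e2norm_sum_le _ _
        _ = ∑ k ∈ S.erase t₁, ρ ^ (T - 1 - k - 1) := by
            apply Finset.sum_congr rfl
            intro k hk
            have hkK : k ∈ K := (Finset.mem_filter.mp (Finset.mem_of_mem_erase hk)).1
            rw [e2norm_smul, hd k hkK, mul_one, abs_of_pos (pow_pos hρ0 _)]
        _ ≤ ∑ j ∈ Finset.range m, ρ ^ j := by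
            apply sum_exp_le ρ hρ4
            · intro k hk
              exact (Finset.mem_filter.mp (Finset.mem_of_mem_erase hk)).2
            · intro k hk
              have hne : k ≠ t₁ := Finset.ne_of_mem_erase hk
              have hkS := Finset.mem_of_mem_erase hk
              rw [Finset.mem_filter] at hkS
              have := ht₁le k hkS.1
              have := hkS.2
              omega
    have htri := sub_e2norm_le (ρ ^ m • d t₁) (∑ k ∈ S.erase t₁, ρ ^ (T - 1 - k - 1) • d k)
    linarith
  -- combine
  calc ∑ t ∈ Finset.range (T - 1), e2norm (x t)
      ≤ ∑ t ∈ Finset.range (T - 1), ∑ j ∈ Finset.range (t - t₁), ρ ^ j := by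
        apply Finset.sum_le_sum
        intro t ht
        exact hub t (by have := Finset.mem_range.mp ht; omega)
    _ = ∑ s ∈ Finset.range m, ∑ j ∈ Finset.range (s + 1), ρ ^ j := by
        rw [hTm, Finset.sum_range_add]
        have hz : ∑ t ∈ Finset.range (t₁ + 1), ∑ j ∈ Finset.range (t - t₁), ρ ^ j = 0 := by
          apply Finset.sum_eq_zero
          intro t ht
          have := Finset.mem_range.mp ht
          rw [show t - t₁ = 0 by omega]
          simp
        rw [hz, zero_add]
        apply Finset.sum_congr rfl
        intro s _
        rw [show t₁ + 1 + s - t₁ = s + 1 by omega]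
    _ < ρ ^ m - ∑ j ∈ Finset.range m, ρ ^ j := key_ineq ρ hρ4 m
    _ ≤ e2norm (x (T - 1)) := hlb
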